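/- In the single-score MNL market, the partial derivative of D_c with respect to the quality γ_{ĉ} of another school ĉ ≠ c is ∂D_c/∂γ_{ĉ} = Σ_{d=max{c,ĉ}}^{n} (−γ_c/(Σ_{i=1}^{d} γ_i)^2)(p_{d+1} − p_d) ≤ 0, with strict inequality when the relevant cutoff differences are not all zero. -/

import Mathlib

open Finset

/-- Cutoff of the next school, extended with `p_{n+1} = 1`. -/
noncomputable def nextCutoff {n : ℕ} (p : Fin n → ℝ) (d : Fin n) : ℝ :=
  if h : (d : ℕ) + 1 < n then p ⟨(d : ℕ) + 1, h⟩ else 1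

/-- The derivative of school `c`'s demand with respect to the quality `γ_ch` of
another school `ch ≠ c` is
`Σ_{d ≥ max{c,ch}} (-γ_c/(Σ_{i ≤ d} γ_i)²)(p_{d+1} - p_d) ≤ 0`, strictly
negative when some relevant cutoff difference is nonzero. -/
theorem mnl_demand_deriv_other_quality {n : ℕ} (γ p : Fin n → ℝ)
    (hγ : ∀ i, 0 < γ i)
    (hp : Monotone p) (hp0 : ∀ i, 0 ≤ p i) (hple : ∀ d : Fin n, p d ≤ nextCutoff p d)
    (c ch : Fin n) (hne : ch ≠ c) :
    HasDerivAt
      (fun g : ℝ => ∑ d ∈ Ici c,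
        (γ c / ∑ i ∈ Iic d, Function.update γ ch g i) * (nextCutoff p d - p d))
      (∑ d ∈ Ici (max c ch),
        (-γ c / (∑ i ∈ Iic d, γ i) ^ 2) * (nextCutoff p d - p d))
      (γ ch) ∧
    (∑ d ∈ Ici (max c ch),
        (-γ c / (∑ i ∈ Iic d, γ i) ^ 2) * (nextCutoff p d - p d)) ≤ 0 ∧
    ((∃ d ∈ Ici (max c ch), nextCutoff p d - p d ≠ 0) →
      (∑ d ∈ Ici (max c ch),
        (-γ c / (∑ i ∈ Iic d, γ i) ^ 2) * (nextCutoff p d - p d)) < 0) := by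
  have hSpos : ∀ d : Fin n, 0 < ∑ i ∈ Iic d, γ i := fun d =>
    Finset.sum_pos (fun i _ => hγ i) ⟨d, mem_Iic.2 le_rfl⟩
  have hΔ : ∀ d : Fin n, 0 ≤ nextCutoff p d - p d := fun d => sub_nonneg.2 (hple d)
  have key : HasDerivAt
      (fun g : ℝ => ∑ d ∈ Ici c,
        (γ c / ∑ i ∈ Iic d, Function.update γ ch g i) * (nextCutoff p d - p d))
      (∑ d ∈ Ici c,
        (if ch ≤ d then (-γ c / (∑ i ∈ Iic d, γ i) ^ 2) * (nextCutoff p d - p d) else 0))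
      (γ ch) := by
    apply HasDerivAt.fun_sum
    intro d _
    by_cases hd : ch ≤ d
    · have hmem : ch ∈ Iic d := mem_Iic.2 hd
      have hrw : ∀ g : ℝ, (∑ i ∈ Iic d, Function.update γ ch g i)
          = g + ∑ i ∈ Iic d \ {ch}, γ i := by
        intro g
        rw [Finset.sum_update_of_mem hmem]
      simp only [hrw, hd, if_true]
      set C := ∑ i ∈ Iic d \ {ch}, γ i with hC
      have hsum : γ ch + C = ∑ i ∈ Iic d, γ i := by
        rw [hC, Finset.sdiff_singleton_eq_erase, add_comm,
          Finset.sum_erase_add _ _ hmem]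
      have hne0 : γ ch + C ≠ 0 := by rw [hsum]; exact (hSpos d).ne'
      have h1 : HasDerivAt (fun g : ℝ => g + C) 1 (γ ch) :=
        (hasDerivAt_id (γ ch)).add_const C
      have h2 : HasDerivAt (fun g : ℝ => γ c / (g + C))
          ((0 * (γ ch + C) - γ c * 1) / (γ ch + C) ^ 2) (γ ch) :=
        (hasDerivAt_const (γ ch) (γ c)).div h1 hne0
      have h3 := h2.mul_const (nextCutoff p d - p d)
      refine h3.congr_deriv ?_
      rw [hsum]; ring
    · have hnm : ch ∉ Iic d := fun h => hd (mem_Iic.1 h)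
      have hrw : ∀ g : ℝ, (∑ i ∈ Iic d, Function.update γ ch g i)
          = ∑ i ∈ Iic d, γ i := by
        intro g
        exact Finset.sum_congr rfl fun i hi =>
          Function.update_of_ne (by rintro rfl; exact hnm hi) _ _
      simp only [hrw, hd, if_false]
      exact hasDerivAt_const _ _
  have hset : ∀ f : Fin n → ℝ,
      (∑ d ∈ Ici c, (if ch ≤ d then f d else 0)) = ∑ d ∈ Ici (max c ch), f d := by
    intro f
    rw [← Finset.sum_filter]
    congr 1
    ext d
    simp [mem_filter, mem_Ici, max_le_iff, and_comm]
  refine ⟨by rw [← hset]; exact key, ?_, ?_⟩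
  · apply Finset.sum_nonpos
    intro d _
    apply mul_nonpos_of_nonpos_of_nonneg _ (hΔ d)
    apply div_nonpos_of_nonpos_of_nonneg
    · linarith [(hγ c)]
    · positivity
  · rintro ⟨d, hd, hdne⟩
    have : ∀ e ∈ Ici (max c ch),
        (-γ c / (∑ i ∈ Iic e, γ i) ^ 2) * (nextCutoff p e - p e) ≤ 0 := by
      intro e _
      apply mul_nonpos_of_nonpos_of_nonneg _ (hΔ e)
      apply div_nonpos_of_nonpos_of_nonneg
      · linarith [(hγ c)]
      · positivity
    have hdpos : 0 < nextCutoff p d - p d := lt_of_le_of_ne (hΔ d) (Ne.symm hdne)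
    have hterm : (-γ c / (∑ i ∈ Iic d, γ i) ^ 2) * (nextCutoff p d - p d) < 0 := by
      apply mul_neg_of_neg_of_pos _ hdpos
      apply div_neg_of_neg_of_pos
      · linarith [(hγ c)]
      · exact pow_pos (hSpos d) 2
    calc (∑ e ∈ Ici (max c ch),
        (-γ c / (∑ i ∈ Iic e, γ i) ^ 2) * (nextCutoff p e - p e))
        < ∑ e ∈ Ici (max c ch), (0 : ℝ) :=
          Finset.sum_lt_sum (fun e he => this e he) ⟨d, hd, by linarith⟩
      _ = 0 := by simp
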